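/- Let X be an n×n real matrix and i an index. Suppose there exists j such that x_ji > x_jk for all k ≠ i. Then there exists a vector v ∈ ℝ^n with v > 0 and v^T e = 1 such that (v^T X)_i > (v^T X)_k for every k ≠ i (i.e., node i is a leader). -/

import Mathlib

theorem leader_of_row_max (n : ℕ) (X : Matrix (Fin n) (Fin n) ℝ)
    (i : Fin n) (j : Fin n) (hj : ∀ k, k ≠ i → X j k < X j i) :
    ∃ v : Fin n → ℝ, (∀ p, 0 < v p) ∧ (∑ p, v p = 1) ∧
      ∀ k, k ≠ i → ∑ p, v p * X p k < ∑ p, v p * X p i := by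
  have hn : 0 < n := i.pos
  have hn1 : (1:ℝ) ≤ n := by exact_mod_cast hn
  have hnR : (0:ℝ) < n := by exact_mod_cast hn
  by_cases hs : ∃ k : Fin n, k ≠ i
  · obtain ⟨k₀, hk₀⟩ := hs
    set s : Finset (Fin n) := Finset.univ.filter (· ≠ i) with hsdef
    have hne : s.Nonempty := ⟨k₀, by simp [hsdef, hk₀]⟩
    set d : ℝ := s.inf' hne (fun k => X j i - X j k) with hd
    have hdpos : 0 < d := by
      rw [hd, Finset.lt_inf'_iff]
      intro b hb
      have hbne : b ≠ i := by simpa [hsdef] using hb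
      have := hj b hbne
      linarith
    set B : ℝ := ∑ p, ∑ q, |X p q| with hB
    have hBpos : 0 ≤ B := by positivity
    have hden : (0:ℝ) < d + 2*B + 1 := by linarith
    set t : ℝ := d / (d + 2*B + 1) with ht
    have ht0 : 0 < t := div_pos hdpos hden
    have ht1 : t < 1 := by
      rw [ht, div_lt_one hden]; linarith
    refine ⟨fun p => t/n + (if p = j then 1 - t else 0), ?_, ?_, ?_⟩
    · intro p
      have : (0:ℝ) < t/n := div_pos ht0 hnR
      by_cases hp : p = j <;> simp [hp] <;> linarith
    · rw [Finset.sum_add_distrib]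
      simp [Finset.sum_const, Finset.card_univ, Finset.sum_ite_eq']
      field_simp
      ring
    · intro k hk
      have hform : ∀ m, ∑ p, (t/n + (if p = j then 1 - t else 0)) * X p m
          = (t/n) * ∑ p, X p m + (1-t) * X j m := by
        intro m
        have h1 : ∀ p, (t/n + (if p = j then 1 - t else 0)) * X p m
            = (t/n) * X p m + (if p = j then (1-t) * X p m else 0) := by
          intro p; by_cases hp : p = j <;> simp [hp] <;> ring
        simp only [h1, Finset.sum_add_distrib, Finset.sum_ite_eq' Finset.univ j,
          Finset.mem_univ, if_true, ← Finset.mul_sum]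
      rw [hform k, hform i]
      have key1 : d ≤ X j i - X j k := by
        have hks : k ∈ s := by simp [hsdef, hk]
        exact Finset.inf'_le _ hks
      have key2 : -(2*B) ≤ ∑ p, X p i - ∑ p, X p k := by
        rw [← Finset.sum_sub_distrib]
        have h1 : ∑ p, (-(|X p i| + |X p k|)) ≤ ∑ p, (X p i - X p k) := by
          apply Finset.sum_le_sum
          intro p _
          have := abs_nonneg (X p i)
          have hi := neg_abs_le (X p i)
          have hk' := le_abs_self (X p k)
          linarith
        have h2 : ∑ p, (|X p i| + |X p k|) ≤ 2*B := by
          rw [Finset.sum_add_distrib, hB, two_mul]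
          have hi : ∑ p, |X p i| ≤ ∑ p, ∑ q, |X p q| :=
            Finset.sum_le_sum (fun p _ =>
              Finset.single_le_sum (f := fun q => |X p q|)
                (fun q _ => abs_nonneg _) (Finset.mem_univ i))
          have hk2 : ∑ p, |X p k| ≤ ∑ p, ∑ q, |X p q| :=
            Finset.sum_le_sum (fun p _ =>
              Finset.single_le_sum (f := fun q => |X p q|)
                (fun q _ => abs_nonneg _) (Finset.mem_univ k))
          linarith
        have h3 : ∑ p, (-(|X p i| + |X p k|)) = -(∑ p, (|X p i| + |X p k|)) :=
          Finset.sum_neg_distrib _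
        linarith
      have hgap : 2*B*t < (1-t)*d := by
        have : (1-t)*d - 2*B*t = d / (d + 2*B + 1) := by
          rw [ht]; field_simp; ring
        have hpos : 0 < d / (d + 2*B + 1) := div_pos hdpos hden
        linarith
      have htn : t/n ≤ t := div_le_self ht0.le hn1
      have htn0 : 0 ≤ t/n := le_of_lt (div_pos ht0 hnR)
      have hA : (t/n) * (-(2*B)) ≤ (t/n) * (∑ p, X p i - ∑ p, X p k) :=
        mul_le_mul_of_nonneg_left key2 htn0
      have hA2 : t * (-(2*B)) ≤ (t/n) * (-(2*B)) := by
        apply mul_le_mul_of_nonpos_right htn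
        linarith
      have hC : (1-t)*d ≤ (1-t)*(X j i - X j k) :=
        mul_le_mul_of_nonneg_left key1 (by linarith)
      nlinarith [hA, hA2, hC, hgap]
  · push_neg at hs
    refine ⟨fun _ => (n:ℝ)⁻¹, fun p => by positivity, ?_, ?_⟩
    · simp [Finset.sum_const, Finset.card_univ]
      field_simp
    · intro k hk
      exact absurd (hs k) hk
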